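/- Let f(q) = ∑_{n≥0} q^n a_n be a slice regular function on 𝔹. Then φ̂₃(r) = d̂₃(f(r𝔹)) / (d₃(𝔹)·r) = d̂₃(f(r𝔹)) / (√3·r) is an increasing (monotone nondecreasing) function of r on (0,1). -/

import Mathlib

noncomputable section

open Filter Metric Set

local notation "ℍ" => Quaternion ℝ

/-- The slice (complex plane) `L_I = ℝ + ℝI` through an imaginary unit `I`. -/
def sliceL (I : ℍ) : Set ℍ := {z : ℍ | ∃ x y : ℝ, z = (x : ℍ) + y • I}

open Classical in
/-- The normalized coefficients `b_n = a_n a_N⁻¹ |a_N|`, where `a_N` is the first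
nonvanishing coefficient (and `b ≡ 0` if all coefficients vanish). -/
def bseq (a : ℕ → ℍ) : ℕ → ℍ :=
  if h : ∃ N, a N ≠ 0 then
    fun n => a n * (a (Nat.find h))⁻¹ * ((‖a (Nat.find h)‖ : ℝ) : ℍ)
  else fun _ => 0

/-- The `n`-th power series coefficient of
`ĝ_{w₁,w₂,w₃}(z) = ∑ zⁿ ∑_{k=0}^n ∑_{j=0}^k (w₂ʲ−w₁ʲ)(w₃^{k−j}−w₁^{k−j})(w₃^{n−k}−w₂^{n−k}) b_j b_{k−j} b_{n−k}`. -/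
def ghatCoeff (b : ℕ → ℍ) (w₁ w₂ w₃ : ℍ) (n : ℕ) : ℍ :=
  ∑ k ∈ Finset.range (n + 1), ∑ j ∈ Finset.range (k + 1),
    (w₂ ^ j - w₁ ^ j) * (w₃ ^ (k - j) - w₁ ^ (k - j)) * (w₃ ^ (n - k) - w₂ ^ (n - k)) *
      (b j * b (k - j) * b (n - k))

/-- The slice `3`-diameter
`d̂₃(f(r𝔹)) = sup_{I∈𝕊} max_{w₁,w₂,w₃ ∈ 𝔹̄_I} max_{z ∈ L_I, |z| ≤ r} |ĝ_{w₁,w₂,w₃}(z)|^{1/3}`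
(for constant `f` all the values `ĝ_{w₁,w₂,w₃}(z)` vanish, so `d̂₃(f(r𝔹)) = 0`). -/
def sliceD3 (a : ℕ → ℍ) (r : ℝ) : ℝ :=
  sSup {x : ℝ | ∃ I w₁ w₂ w₃ z : ℍ, I ^ 2 = -1 ∧
    w₁ ∈ sliceL I ∧ ‖w₁‖ ≤ 1 ∧ w₂ ∈ sliceL I ∧ ‖w₂‖ ≤ 1 ∧ w₃ ∈ sliceL I ∧ ‖w₃‖ ≤ 1 ∧
    z ∈ sliceL I ∧ ‖z‖ ≤ r ∧
    x = ‖∑' n : ℕ, z ^ n * ghatCoeff (bseq a) w₁ w₂ w₃ n‖ ^ ((1 : ℝ) / 3)}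

lemma unit_facts {I : ℍ} (hI : I * I = -1) : I.re = 0 ∧ ‖I‖ = 1 := by
  have hn : ‖I‖ * ‖I‖ = 1 := by
    have := congrArg norm hI
    rwa [norm_mul, norm_neg, norm_one] at this
  have hnorm : ‖I‖ = 1 := by nlinarith [norm_nonneg I]
  have hsq : Quaternion.normSq I = 1 := by rw [Quaternion.normSq_eq_norm_mul_self, hn]
  have hre2 : (I * I).re = -1 := by rw [hI]; simp; rfl
  rw [Quaternion.re_mul] at hre2
  have hns : I.re ^ 2 + I.imI ^ 2 + I.imJ ^ 2 + I.imK ^ 2 = 1 := by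
    have h := Quaternion.normSq_def' I
    rw [hsq] at h
    linarith [h.symm]
  have hre : I.re = 0 := by
    have h0 : I.re * I.re = 0 := by nlinarith [hns, hre2]
    exact mul_self_eq_zero.mp h0
  exact ⟨hre, hnorm⟩

lemma star_unit {I : ℍ} (hI : I * I = -1) : star I = -I := by
  obtain ⟨hre, -⟩ := unit_facts hI
  ext <;> simp [hre]

lemma norm_liftAux {I : ℍ} (hI : I * I = -1) (ζ : ℂ) :
    ‖Complex.liftAux I hI ζ‖ = ‖ζ‖ := by
  obtain ⟨hre, hnorm⟩ := unit_facts hI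
  have hns : I.imI ^ 2 + I.imJ ^ 2 + I.imK ^ 2 = 1 := by
    have hsq : Quaternion.normSq I = 1 := by
      rw [Quaternion.normSq_eq_norm_mul_self, hnorm]; norm_num
    have h := Quaternion.normSq_def' I
    rw [hsq, hre] at h
    linarith [h.symm]
  set q := Complex.liftAux I hI ζ with hqdef
  have hq : q = (ζ.re : ℍ) + ζ.im • I := by
    rw [hqdef, Complex.liftAux_apply]
    rfl
  have hcomp : Quaternion.normSq q = ζ.re ^ 2 + ζ.im ^ 2 := by
    rw [Quaternion.normSq_def', hq]
    simp [hre]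
    ring_nf
    linear_combination (ζ.im ^ 2) * hns
  have h1 : ‖q‖ * ‖q‖ = ‖ζ‖ * ‖ζ‖ := by
    rw [← Quaternion.normSq_eq_norm_mul_self, hcomp]
    rw [← sq, ← Complex.normSq_eq_norm_sq, Complex.normSq_apply]
    ring
  calc ‖q‖ = Real.sqrt (‖q‖ * ‖q‖) := (Real.sqrt_mul_self (norm_nonneg q)).symm
    _ = Real.sqrt (‖ζ‖ * ‖ζ‖) := by rw [h1]
    _ = ‖ζ‖ := Real.sqrt_mul_self (norm_nonneg ζ)


/-- majorant sequence -/
def Tmaj (a : ℕ → ℍ) (n : ℕ) : ℝ :=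
  ∑ k ∈ Finset.range (n + 1), ∑ j ∈ Finset.range (k + 1),
    ‖a j‖ * ‖a (k - j)‖ * ‖a (n - k)‖

lemma Tmaj_nonneg (a : ℕ → ℍ) (n : ℕ) : 0 ≤ Tmaj a n := by
  refine Finset.sum_nonneg fun k _ => Finset.sum_nonneg fun j _ => ?_
  positivity

lemma bseq_norm_le (a : ℕ → ℍ) (n : ℕ) : ‖bseq a n‖ ≤ ‖a n‖ := by
  classical
  rw [bseq]
  split_ifs with h
  · rcases eq_or_ne (a n) 0 with h0 | h0
    · simp [h0]
    · have hN : a (Nat.find h) ≠ 0 := Nat.find_spec h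
      rw [norm_mul, norm_mul, norm_inv]
      have : ‖((‖a (Nat.find h)‖ : ℝ) : ℍ)‖ = ‖a (Nat.find h)‖ := by
        rw [Quaternion.norm_coe, Real.norm_eq_abs, abs_of_nonneg (norm_nonneg _)]
      rw [this, mul_assoc, inv_mul_cancel₀ (by simpa using hN), mul_one]
  · simp

lemma ghatCoeff_norm_le (a : ℕ → ℍ) {w₁ w₂ w₃ : ℍ} (h₁ : ‖w₁‖ ≤ 1) (h₂ : ‖w₂‖ ≤ 1)
    (h₃ : ‖w₃‖ ≤ 1) (n : ℕ) : ‖ghatCoeff (bseq a) w₁ w₂ w₃ n‖ ≤ 8 * Tmaj a n := by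
  have hpow : ∀ (u v : ℍ) (m : ℕ), ‖u‖ ≤ 1 → ‖v‖ ≤ 1 → ‖u ^ m - v ^ m‖ ≤ 2 := by
    intro u v m hu hv
    calc ‖u ^ m - v ^ m‖ ≤ ‖u ^ m‖ + ‖v ^ m‖ := norm_sub_le _ _
      _ ≤ 1 + 1 := by
          refine add_le_add ?_ ?_ <;>
            · rw [norm_pow]
              exact pow_le_one₀ (norm_nonneg _) ‹_›
      _ = 2 := by norm_num
  rw [ghatCoeff, Tmaj, Finset.mul_sum]
  refine (norm_sum_le _ _).trans (Finset.sum_le_sum fun k hk => ?_)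
  rw [Finset.mul_sum]
  refine (norm_sum_le _ _).trans (Finset.sum_le_sum fun j hj => ?_)
  simp only [norm_mul]
  have e1 := hpow w₂ w₁ j h₂ h₁
  have e2 := hpow w₃ w₁ (k - j) h₃ h₁
  have e3 := hpow w₃ w₂ (n - k) h₃ h₂
  have b1 := bseq_norm_le a j
  have b2 := bseq_norm_le a (k - j)
  have b3 := bseq_norm_le a (n - k)
  calc ‖w₂ ^ j - w₁ ^ j‖ * ‖w₃ ^ (k - j) - w₁ ^ (k - j)‖ * ‖w₃ ^ (n - k) - w₂ ^ (n - k)‖ *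
        (‖bseq a j‖ * ‖bseq a (k - j)‖ * ‖bseq a (n - k)‖)
      ≤ 2 * 2 * 2 * (‖a j‖ * ‖a (k - j)‖ * ‖a (n - k)‖) := by
        gcongr <;> positivity
    _ = 8 * (‖a j‖ * ‖a (k - j)‖ * ‖a (n - k)‖) := by ring

lemma Tmaj_summable (a : ℕ → ℍ)
    (hconv : ∀ ρ : ℝ, 0 ≤ ρ → ρ < 1 → Summable fun n : ℕ => ‖a n‖ * ρ ^ n)
    {ρ : ℝ} (hρ0 : 0 ≤ ρ) (hρ1 : ρ < 1) : Summable fun n => Tmaj a n * ρ ^ n := by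
  set f : ℕ → ℝ := fun n => ‖a n‖ * ρ ^ n with hf
  have hfs : Summable f := hconv ρ hρ0 hρ1
  have hfnn : ∀ n, 0 ≤ f n := fun n => by positivity
  have hfnorm : Summable fun n => ‖f n‖ := by
    simpa only [Real.norm_of_nonneg (hfnn _)] using hfs
  set g : ℕ → ℝ := fun n => ∑ j ∈ Finset.range (n + 1), f j * f (n - j) with hg
  have hgnorm : Summable fun n => ‖g n‖ :=
    summable_norm_sum_mul_range_of_summable_norm hfnorm hfnorm
  have hhnorm : Summable fun n => ‖∑ k ∈ Finset.range (n + 1), g k * f (n - k)‖ :=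
    summable_norm_sum_mul_range_of_summable_norm hgnorm hfnorm
  have hh : Summable fun n => ∑ k ∈ Finset.range (n + 1), g k * f (n - k) :=
    hhnorm.of_norm
  refine hh.congr fun n => ?_
  rw [Tmaj, Finset.sum_mul]
  refine Finset.sum_congr rfl fun k hk => ?_
  rw [hg, Finset.sum_mul, Finset.sum_mul]
  refine Finset.sum_congr rfl fun j hj => ?_
  have hjk : j ≤ k := Finset.mem_range_succ_iff.mp hj
  have hkn : k ≤ n := Finset.mem_range_succ_iff.mp hk
  have hpow : ρ ^ j * ρ ^ (k - j) * ρ ^ (n - k) = ρ ^ n := by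
    rw [← pow_add, ← pow_add]
    congr 1
    omega
  calc f j * f (k - j) * f (n - k)
      = ‖a j‖ * ‖a (k - j)‖ * ‖a (n - k)‖ * (ρ ^ j * ρ ^ (k - j) * ρ ^ (n - k)) := by
        rw [hf]; ring
    _ = ‖a j‖ * ‖a (k - j)‖ * ‖a (n - k)‖ * ρ ^ n := by rw [hpow]

lemma ghatCoeff_eq_zero (b : ℕ → ℍ) (w₁ w₂ w₃ : ℍ) {n : ℕ} (hn : n < 3) :
    ghatCoeff b w₁ w₂ w₃ n = 0 := by
  rw [ghatCoeff]
  refine Finset.sum_eq_zero fun k hk => Finset.sum_eq_zero fun j hj => ?_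
  have hjk : j ≤ k := Finset.mem_range_succ_iff.mp hj
  have hkn : k ≤ n := Finset.mem_range_succ_iff.mp hk
  rcases Nat.eq_zero_or_pos j with h0 | h0
  · subst h0; simp
  rcases Nat.eq_zero_or_pos (k - j) with h1 | h1
  · rw [h1]; simp
  have h2 : n - k = 0 := by omega
  rw [h2]; simp

set_option maxHeartbeats 1000000 in
lemma main_step (a : ℕ → ℍ)
    (hconv : ∀ ρ : ℝ, 0 ≤ ρ → ρ < 1 → Summable fun n : ℕ => ‖a n‖ * ρ ^ n)
    {r₁ r₂ : ℝ} (h1 : 0 < r₁) (h12 : r₁ ≤ r₂) (h3 : r₂ < 1)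
    {I w₁ w₂ w₃ z : ℍ} (hI : I ^ 2 = -1)
    (hn₁ : ‖w₁‖ ≤ 1) (hn₂ : ‖w₂‖ ≤ 1) (hn₃ : ‖w₃‖ ≤ 1)
    (hz : z ∈ sliceL I) (hzn : ‖z‖ ≤ r₁) :
    ∃ z' : ℍ, z' ∈ sliceL I ∧ ‖z'‖ ≤ r₂ ∧
      ‖∑' n : ℕ, z ^ n * ghatCoeff (bseq a) w₁ w₂ w₃ n‖ ^ ((1:ℝ)/3) * r₂ ≤
      ‖∑' n : ℕ, z' ^ n * ghatCoeff (bseq a) w₁ w₂ w₃ n‖ ^ ((1:ℝ)/3) * r₁ := by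
  classical
  have h2 : 0 < r₂ := lt_of_lt_of_le h1 h12
  have hI' : I * I = -1 := by rwa [sq] at hI
  set Φ := Complex.liftAux I hI' with hΦ
  have hΦnorm : ∀ ζ : ℂ, ‖Φ ζ‖ = ‖ζ‖ := norm_liftAux hI'
  -- the complex module structure on ℍ induced by I
  letI : Module ℂ ℍ := Module.compHom ℍ (Φ.toRingHom : ℂ →+* ℍ)
  have hsmul : ∀ (ζ : ℂ) (q : ℍ), ζ • q = Φ ζ * q := fun _ _ => rfl
  letI : NormedSpace ℂ ℍ :=
    { norm_smul_le := fun ζ q => by rw [hsmul, norm_mul, hΦnorm] }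
  set c : ℕ → ℍ := ghatCoeff (bseq a) w₁ w₂ w₃ with hc
  set d : ℕ → ℍ := fun n => c (n + 3) with hd
  have hcb : ∀ n, ‖c n‖ ≤ 8 * Tmaj a n := ghatCoeff_norm_le a hn₁ hn₂ hn₃
  -- the power series
  set p : FormalMultilinearSeries ℂ ℂ ℍ :=
    fun n => ContinuousMultilinearMap.mkPiRing ℂ (Fin n) (d n) with hp
  set ρ₀ : ℝ := (r₂ + 1) / 2 with hρ₀
  have hρ₀0 : 0 < ρ₀ := by positivity
  have hρ₀1 : ρ₀ < 1 := by rw [hρ₀]; linarith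
  have hρ₀2 : r₂ < ρ₀ := by rw [hρ₀]; linarith
  have hTs : Summable fun n => Tmaj a n * ρ₀ ^ n := Tmaj_summable a hconv hρ₀0.le hρ₀1
  have hTs3 : Summable fun n => Tmaj a (n + 3) * ρ₀ ^ n := by
    have h' : Summable fun n => Tmaj a (n + 3) * ρ₀ ^ (n + 3) :=
      (summable_nat_add_iff 3).mpr hTs
    refine (h'.mul_left ((ρ₀ ^ 3)⁻¹)).congr fun n => ?_
    rw [pow_add]
    field_simp
  have hps : Summable fun n => ‖p n‖ * ρ₀ ^ n := by
    refine Summable.of_nonneg_of_le (fun n => by positivity) (fun n => ?_)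
      (hTs3.mul_left 8)
    have : ‖p n‖ = ‖d n‖ := ContinuousMultilinearMap.norm_mkPiRing (𝕜 := ℂ) (ι := Fin n) (d n)
    rw [this]
    have := hcb (n + 3)
    have h8 : 0 ≤ ρ₀ ^ n := by positivity
    calc ‖d n‖ * ρ₀ ^ n ≤ (8 * Tmaj a (n + 3)) * ρ₀ ^ n := by
          exact mul_le_mul_of_nonneg_right (by simpa [hd] using this) h8
      _ = 8 * (Tmaj a (n + 3) * ρ₀ ^ n) := by ring
  have hrad : (ρ₀.toNNReal : ENNReal) ≤ p.radius := by
    apply p.le_radius_of_summable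
    simpa [Real.coe_toNNReal _ hρ₀0.le] using hps
  have hradpos : 0 < p.radius := lt_of_lt_of_le (by
    simpa using (Real.toNNReal_pos.mpr hρ₀0 : 0 < ρ₀.toNNReal)) hrad
  have hmem : ∀ ζ : ℂ, ‖ζ‖ ≤ r₂ → ζ ∈ Metric.eball (0 : ℂ) p.radius := by
    intro ζ hζ
    rw [mem_emetric_ball_zero_iff]
    refine lt_of_lt_of_le ?_ hrad
    rw [enorm_eq_nnnorm, ENNReal.coe_lt_coe, ← NNReal.coe_lt_coe, coe_nnnorm, Real.coe_toNNReal _ hρ₀0.le]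
    exact lt_of_le_of_lt hζ hρ₀2
  set F : ℂ → ℍ := p.sum with hF
  have hFsum : ∀ ζ : ℂ, ‖ζ‖ ≤ r₂ → HasSum (fun n => ζ ^ n • d n) (F ζ) := by
    intro ζ hζ
    have := p.hasSum (hmem ζ hζ)
    refine this.congr_fun fun n => ?_
    rw [hp]
    rw [ContinuousMultilinearMap.mkPiRing_apply]
    congr 1
    simp [Finset.prod_const]
  have hG : ∀ ζ : ℂ, ‖ζ‖ ≤ r₂ → HasSum (fun n => (Φ ζ) ^ n * c n) ((Φ ζ) ^ 3 * F ζ) := by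
    intro ζ hζ
    have h0 := ((hFsum ζ hζ).mul_left ((Φ ζ) ^ 3))
    have h0' : HasSum (fun n => (Φ ζ) ^ (n + 3) * c (n + 3)) ((Φ ζ) ^ 3 * F ζ) := by
      refine h0.congr_fun fun n => ?_
      simp only [hd]
      rw [hsmul, map_pow, ← mul_assoc, ← pow_add, add_comm 3 n]
    have h1 := (hasSum_nat_add_iff (f := fun n => (Φ ζ) ^ n * c n) 3).mp h0'
    have h2' : ∑ i ∈ Finset.range 3, (Φ ζ) ^ i * c i = 0 := by
      refine Finset.sum_eq_zero fun i hi => ?_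
      have : c i = 0 := ghatCoeff_eq_zero _ _ _ _ (Finset.mem_range.mp hi)
      rw [this, mul_zero]
    rw [h2', add_zero] at h1
    exact h1
  -- differentiability and maximum modulus
  have hdiff : DifferentiableOn ℂ F (Metric.eball 0 p.radius) :=
    (p.hasFPowerSeriesOnBall hradpos).differentiableOn
  have hclos : closure (ball (0:ℂ) r₂) = closedBall 0 r₂ := closure_ball 0 h2.ne'
  have hsub : closedBall (0:ℂ) r₂ ⊆ Metric.eball (0:ℂ) p.radius := fun ζ hζ =>
    hmem ζ (mem_closedBall_zero_iff.mp hζ)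
  have hdc : DiffContOnCl ℂ F (ball (0:ℂ) r₂) :=
    DifferentiableOn.diffContOnCl (by rw [hclos]; exact hdiff.mono hsub)
  have hsne : (sphere (0:ℂ) r₂).Nonempty := NormedSpace.sphere_nonempty.mpr h2.le
  have hcont : ContinuousOn (fun ζ => ‖F ζ‖) (sphere (0:ℂ) r₂) := by
    refine continuous_norm.comp_continuousOn (hdc.continuousOn.mono ?_)
    rw [hclos]
    exact sphere_subset_closedBall
  obtain ⟨ζ₀, hζ₀mem, hζ₀max⟩ := (isCompact_sphere (0:ℂ) r₂).exists_isMaxOn hsne hcont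
  set C := ‖F ζ₀‖ with hCdef
  have hC0 : 0 ≤ C := norm_nonneg _
  have hCmax : ∀ ζ : ℂ, ‖ζ‖ ≤ r₂ → ‖F ζ‖ ≤ C := by
    intro ζ hζ
    refine Complex.norm_le_of_forall_mem_frontier_norm_le isBounded_ball hdc ?_ ?_
    · intro w hw
      rw [frontier_ball 0 h2.ne'] at hw
      exact hζ₀max hw
    · rw [hclos]; exact mem_closedBall_zero_iff.mpr hζ
  -- parametrize z by a complex number
  obtain ⟨x, y, hxy⟩ := hz
  set ζ₁ : ℂ := ⟨x, y⟩ with hζ₁def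
  have hzΦ : z = Φ ζ₁ := by rw [hxy, hΦ, Complex.liftAux_apply]; rfl
  have hζ₁r : ‖ζ₁‖ ≤ r₁ := by rw [← hΦnorm, ← hzΦ]; exact hzn
  have hζ₁r₂ : ‖ζ₁‖ ≤ r₂ := hζ₁r.trans h12
  have hζ₀r : ‖ζ₀‖ = r₂ := mem_sphere_zero_iff_norm.mp hζ₀mem
  refine ⟨Φ ζ₀, ⟨ζ₀.re, ζ₀.im, by rw [hΦ, Complex.liftAux_apply]; rfl⟩,
    by rw [hΦnorm, hζ₀r], ?_⟩
  have e₁ : ∑' n : ℕ, z ^ n * c n = Φ ζ₁ ^ 3 * F ζ₁ := by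
    rw [hzΦ]; exact (hG ζ₁ hζ₁r₂).tsum_eq
  have e₂ : ∑' n : ℕ, Φ ζ₀ ^ n * c n = Φ ζ₀ ^ 3 * F ζ₀ := (hG ζ₀ hζ₀r.le).tsum_eq
  have hb₁ : ‖∑' n : ℕ, z ^ n * c n‖ ≤ r₁ ^ 3 * C := by
    rw [e₁, norm_mul, norm_pow, hΦnorm]
    have h5 : ‖ζ₁‖ ^ 3 ≤ r₁ ^ 3 := pow_le_pow_left₀ (norm_nonneg _) hζ₁r 3
    exact mul_le_mul h5 (hCmax ζ₁ hζ₁r₂) (norm_nonneg _) (by positivity)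
  have hb₂ : ‖∑' n : ℕ, Φ ζ₀ ^ n * c n‖ = r₂ ^ 3 * C := by
    rw [e₂, norm_mul, norm_pow, hΦnorm, hζ₀r]
  have hcube : ∀ t : ℝ, 0 ≤ t → (t ^ 3 * C) ^ ((1:ℝ)/3) = t * C ^ ((1:ℝ)/3) := by
    intro t ht
    rw [Real.mul_rpow (by positivity) hC0]
    congr 1
    rw [← Real.rpow_natCast t 3, ← Real.rpow_mul ht]
    norm_num
  calc ‖∑' n : ℕ, z ^ n * c n‖ ^ ((1:ℝ)/3) * r₂
      ≤ (r₁ ^ 3 * C) ^ ((1:ℝ)/3) * r₂ := by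
        exact mul_le_mul_of_nonneg_right
          (Real.rpow_le_rpow (norm_nonneg _) hb₁ (by norm_num)) h2.le
    _ = (r₂ ^ 3 * C) ^ ((1:ℝ)/3) * r₁ := by
        rw [hcube r₁ h1.le, hcube r₂ h2.le]; ring
    _ = ‖∑' n : ℕ, Φ ζ₀ ^ n * c n‖ ^ ((1:ℝ)/3) * r₁ := by rw [hb₂]

def SD (a : ℕ → ℍ) (r : ℝ) : Set ℝ :=
  {x : ℝ | ∃ I w₁ w₂ w₃ z : ℍ, I ^ 2 = -1 ∧
    w₁ ∈ sliceL I ∧ ‖w₁‖ ≤ 1 ∧ w₂ ∈ sliceL I ∧ ‖w₂‖ ≤ 1 ∧ w₃ ∈ sliceL I ∧ ‖w₃‖ ≤ 1 ∧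
    z ∈ sliceL I ∧ ‖z‖ ≤ r ∧
    x = ‖∑' n : ℕ, z ^ n * ghatCoeff (bseq a) w₁ w₂ w₃ n‖ ^ ((1 : ℝ) / 3)}

lemma sliceD3_eq (a : ℕ → ℍ) (r : ℝ) : sliceD3 a r = sSup (SD a r) := rfl

lemma tsum_bound (a : ℕ → ℍ)
    (hconv : ∀ ρ : ℝ, 0 ≤ ρ → ρ < 1 → Summable fun n : ℕ => ‖a n‖ * ρ ^ n)
    {w₁ w₂ w₃ z : ℍ} (hn1 : ‖w₁‖ ≤ 1) (hn2 : ‖w₂‖ ≤ 1) (hn3 : ‖w₃‖ ≤ 1)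
    {r : ℝ} (hr0 : 0 ≤ r) (hr1 : r < 1) (hz : ‖z‖ ≤ r) :
    ‖∑' n : ℕ, z ^ n * ghatCoeff (bseq a) w₁ w₂ w₃ n‖ ≤ ∑' n : ℕ, 8 * (Tmaj a n * r ^ n) := by
  set c := ghatCoeff (bseq a) w₁ w₂ w₃ with hc
  have hs : Summable fun n => 8 * (Tmaj a n * r ^ n) :=
    (Tmaj_summable a hconv hr0 hr1).mul_left 8
  have hb : ∀ n : ℕ, ‖z ^ n * c n‖ ≤ 8 * (Tmaj a n * r ^ n) := by
    intro n
    rw [norm_mul, norm_pow]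
    calc ‖z‖ ^ n * ‖c n‖ ≤ r ^ n * (8 * Tmaj a n) := by
          exact mul_le_mul (pow_le_pow_left₀ (norm_nonneg _) hz n)
            (ghatCoeff_norm_le a hn1 hn2 hn3 n) (norm_nonneg _) (by positivity)
      _ = 8 * (Tmaj a n * r ^ n) := by ring
  have hsn : Summable fun n => ‖z ^ n * c n‖ :=
    Summable.of_nonneg_of_le (fun n => norm_nonneg _) hb hs
  exact (norm_tsum_le_tsum_norm hsn).trans (Summable.tsum_le_tsum hb hsn hs)

lemma SD_bddAbove (a : ℕ → ℍ)
    (hconv : ∀ ρ : ℝ, 0 ≤ ρ → ρ < 1 → Summable fun n : ℕ => ‖a n‖ * ρ ^ n)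
    {r : ℝ} (hr0 : 0 ≤ r) (hr1 : r < 1) : BddAbove (SD a r) := by
  refine ⟨(∑' n : ℕ, 8 * (Tmaj a n * r ^ n)) ^ ((1:ℝ)/3), fun x hx => ?_⟩
  obtain ⟨I, w₁, w₂, w₃, z, hI, hw1, hn1, hw2, hn2, hw3, hn3, hzs, hzn, hxeq⟩ := hx
  rw [hxeq]
  exact Real.rpow_le_rpow (norm_nonneg _) (tsum_bound a hconv hn1 hn2 hn3 hr0 hr1 hzn)
    (by norm_num)

lemma SD_nonneg (a : ℕ → ℍ) (r : ℝ) : ∀ x ∈ SD a r, 0 ≤ x := by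
  rintro x ⟨I, w₁, w₂, w₃, z, hI, hw1, hn1, hw2, hn2, hw3, hn3, hzs, hzn, hxeq⟩
  rw [hxeq]
  positivity

lemma key_ineq (a : ℕ → ℍ)
    (hconv : ∀ ρ : ℝ, 0 ≤ ρ → ρ < 1 → Summable fun n : ℕ => ‖a n‖ * ρ ^ n)
    {r₁ r₂ : ℝ} (h1 : 0 < r₁) (h12 : r₁ ≤ r₂) (h3 : r₂ < 1) :
    sliceD3 a r₁ * r₂ ≤ sliceD3 a r₂ * r₁ := by
  have h2 : 0 < r₂ := lt_of_lt_of_le h1 h12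
  rw [sliceD3_eq, sliceD3_eq]
  have hbdd : BddAbove (SD a r₂) := SD_bddAbove a hconv h2.le h3
  have hnn : 0 ≤ sSup (SD a r₂) := Real.sSup_nonneg (SD_nonneg a r₂)
  have hmain : sSup (SD a r₁) ≤ sSup (SD a r₂) * r₁ / r₂ := by
    refine Real.sSup_le (fun x hx => ?_) (by positivity)
    obtain ⟨I, w₁, w₂, w₃, z, hI, hw1, hn1, hw2, hn2, hw3, hn3, hzs, hzn, hxeq⟩ := hx
    obtain ⟨z', hz's, hz'n, hineq⟩ := main_step a hconv h1 h12 h3 hI hn1 hn2 hn3 hzs hzn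
    have hmem2 : ‖∑' n : ℕ, z' ^ n * ghatCoeff (bseq a) w₁ w₂ w₃ n‖ ^ ((1:ℝ)/3) ∈ SD a r₂ :=
      ⟨I, w₁, w₂, w₃, z', hI, hw1, hn1, hw2, hn2, hw3, hn3, hz's, hz'n, rfl⟩
    have hle := le_csSup hbdd hmem2
    rw [hxeq, le_div_iff₀ h2]
    calc ‖∑' n : ℕ, z ^ n * ghatCoeff (bseq a) w₁ w₂ w₃ n‖ ^ ((1:ℝ)/3) * r₂
        ≤ ‖∑' n : ℕ, z' ^ n * ghatCoeff (bseq a) w₁ w₂ w₃ n‖ ^ ((1:ℝ)/3) * r₁ := hineq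
      _ ≤ sSup (SD a r₂) * r₁ := mul_le_mul_of_nonneg_right hle h1.le
  calc sSup (SD a r₁) * r₂ ≤ (sSup (SD a r₂) * r₁ / r₂) * r₂ :=
        mul_le_mul_of_nonneg_right hmain h2.le
    _ = sSup (SD a r₂) * r₁ := by field_simp

/-- The ratio `φ̂₃(r) = d̂₃(f(r𝔹)) / (√3 · r)` is increasing on `(0,1)`. -/
theorem sliceD3_ratio_monotone (a : ℕ → ℍ)
    (hconv : ∀ ρ : ℝ, 0 ≤ ρ → ρ < 1 → Summable fun n : ℕ => ‖a n‖ * ρ ^ n) :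
    MonotoneOn (fun r : ℝ => sliceD3 a r / (Real.sqrt 3 * r)) (Set.Ioo (0 : ℝ) 1) := by
  intro r₁ hr₁ r₂ hr₂ h12
  have h1 : 0 < r₁ := hr₁.1
  have h2 : 0 < r₂ := hr₂.1
  have h3 : r₂ < 1 := hr₂.2
  have hs3 : 0 < Real.sqrt 3 := Real.sqrt_pos.mpr (by norm_num)
  have hkey := key_ineq a hconv h1 h12 h3
  simp only
  rw [div_le_div_iff₀ (by positivity) (by positivity)]
  calc sliceD3 a r₁ * (Real.sqrt 3 * r₂) = Real.sqrt 3 * (sliceD3 a r₁ * r₂) := by ring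
    _ ≤ Real.sqrt 3 * (sliceD3 a r₂ * r₁) := by
        exact mul_le_mul_of_nonneg_left hkey hs3.le
    _ = sliceD3 a r₂ * (Real.sqrt 3 * r₁) := by ring
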